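/- arXiv:1906.02895 — 2 statements merged into one kernel-verified Lean document; each statement's English description precedes it below -/
import Mathlib

section
/- Let G be a finite simple graph with at least one edge. Then Eρ(G) < maxρ(G) ≤ mr(F₂,G) ≤ nd(G) < 2^{2·maxρ(G)+2} ≤ 2^{8·Eρ(G)+2}. -/
open scoped Classical

namespace AvgCutRank

variable {V : Type*} {W : Type*}

/-- Local complementation of `G` at a vertex `v`: complement the adjacency inside
the neighborhood of `v`. -/
def localComp (G : SimpleGraph V) (v : V) : SimpleGraph V where
  Adj x y := x ≠ y ∧ (G.Adj x y ↔ ¬(G.Adj v x ∧ G.Adj v y))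
  symm := by
    constructor
    rintro x y ⟨hxy, h⟩
    refine ⟨hxy.symm, ?_⟩
    rw [G.adj_comm y x, and_comm]
    exact h
  loopless := ⟨fun x h => h.1 rfl⟩

/-- Two graphs on the same vertex set are locally equivalent if one is obtained from
the other by a sequence of local complementations. -/
def LocallyEquivalent (G H : SimpleGraph V) : Prop :=
  Relation.ReflTransGen (fun A B => ∃ v, B = localComp A v) G H

/-- `H` is (isomorphic to) a vertex-minor of `G`: `H` is isomorphic to an induced
subgraph of a graph locally equivalent to `G`. -/
def IsVertexMinor (H : SimpleGraph W) (G : SimpleGraph V) : Prop :=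
  ∃ (G' : SimpleGraph V) (s : Set V), LocallyEquivalent G G' ∧ Nonempty (H ≃g G'.induce s)

/-- The cut-rank of a set `X` of vertices: the rank over GF(2) of the `X × Xᶜ`
adjacency submatrix. -/
noncomputable def cutRank [Fintype V] [DecidableEq V] (G : SimpleGraph V)
    (X : Finset V) : ℕ :=
  (Matrix.of fun (i : X) (j : (Xᶜ : Finset V)) =>
    if G.Adj i.1 j.1 then (1 : ZMod 2) else 0).rank

/-- The average cut-rank of a graph. -/
noncomputable def avgCutRank [Fintype V] [DecidableEq V] (G : SimpleGraph V) : ℝ :=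
  (∑ X : Finset V, (cutRank G X : ℝ)) / 2 ^ Fintype.card V

/-- The maximum cut-rank of a graph. -/
noncomputable def maxCutRank [Fintype V] [DecidableEq V] (G : SimpleGraph V) : ℕ :=
  Finset.univ.sup (cutRank G)

/-- `x` and `y` are equal or twins: they have the same neighbors outside `{x, y}`. -/
def TwinEq (G : SimpleGraph V) (x y : V) : Prop :=
  x = y ∨ ∀ z, z ≠ x → z ≠ y → (G.Adj x z ↔ G.Adj y z)

/-- `x` and `y` are twins. -/
def IsTwins (G : SimpleGraph V) (x y : V) : Prop :=
  x ≠ y ∧ ∀ z, z ≠ x → z ≠ y → (G.Adj x z ↔ G.Adj y z)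

/-- Neighborhood diversity: the number of twin classes. -/
noncomputable def nd [Fintype V] [DecidableEq V] (G : SimpleGraph V) : ℕ :=
  (Finset.univ.image fun x => Finset.univ.filter fun y => TwinEq G x y).card

/-- The minimum rank of a graph over a field `F`. -/
noncomputable def minRank (F : Type*) [Field F] [Fintype V] [DecidableEq V]
    (G : SimpleGraph V) : ℕ :=
  sInf { r : ℕ | ∃ A : Matrix V V F, A.IsSymm ∧
    (∀ i j, i ≠ j → (A i j ≠ 0 ↔ G.Adj i j)) ∧ A.rank = r }

/-- The clique delta-cover number: the minimum `t` such that the edge set of `G` is the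
symmetric difference of the edge sets of `t` complete graphs (given by their vertex sets). -/
noncomputable def cliqueDeltaCover [Fintype V] [DecidableEq V] (G : SimpleGraph V) : ℕ :=
  sInf { t : ℕ | ∃ S : Fin t → Finset V, ∀ x y : V, x ≠ y →
    (G.Adj x y ↔ Odd (Finset.univ.filter fun i => x ∈ S i ∧ y ∈ S i).card) }

/-- `C` is the vertex set of an attached star in `G`: the subgraph induced on `C` is a
star (with center `c`) all of whose noncentral vertices are leaves of `G`. -/
def IsAttachedStar (G : SimpleGraph V) (C : Set V) : Prop :=
  ∃ c ∈ C, (∃ x ∈ C, x ≠ c) ∧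
    ∀ x ∈ C, x ≠ c → G.Adj c x ∧ ∀ y, G.Adj x y → y = c

/-- Deletion of a vertex: the induced subgraph on the complement of `{v}`. -/
def deleteVert (G : SimpleGraph V) (v : V) : SimpleGraph {w : V // w ≠ v} :=
  SimpleGraph.comap Subtype.val G

/-- Deletion of a finite set of vertices. -/
def deleteVerts (G : SimpleGraph V) (T : Finset V) : SimpleGraph {w : V // w ∉ T} :=
  SimpleGraph.comap Subtype.val G

/-- The star `K_{1,m}` with center `0`. -/
def starGraph (m : ℕ) : SimpleGraph (Fin (m + 1)) :=
  SimpleGraph.fromRel fun x _ => x = 0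

/-- The disjoint union of three copies of `K₂`. -/
def threeK2 : SimpleGraph (Fin 6) :=
  SimpleGraph.fromRel fun x y =>
    (x = 0 ∧ y = 1) ∨ (x = 2 ∧ y = 3) ∨ (x = 4 ∧ y = 5)

/-- The disjoint union of two paths on three vertices. -/
def twoP3 : SimpleGraph (Fin 6) :=
  SimpleGraph.fromRel fun x y =>
    (x = 0 ∧ y = 1) ∨ (x = 1 ∧ y = 2) ∨ (x = 3 ∧ y = 4) ∨ (x = 4 ∧ y = 5)

/-- The disjoint union of `K₂` and the star `K_{1,k+1}`. -/
def K2PlusStar (k : ℕ) : SimpleGraph (Fin (k + 4)) :=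
  SimpleGraph.fromRel fun x y => (x.val = 0 ∧ y.val = 1) ∨ (x.val = 2 ∧ 3 ≤ y.val)

/-- `E_k`: the star `K_{1,k+1}` with one edge subdivided. Vertex `0` is the center,
`1` is the subdivision vertex, `2` is the leaf behind it, `3, …, k+2` are leaves. -/
def Egraph (k : ℕ) : SimpleGraph (Fin (k + 3)) :=
  SimpleGraph.fromRel fun x y =>
    (x.val = 0 ∧ y.val = 1) ∨ (x.val = 1 ∧ y.val = 2) ∨ (x.val = 0 ∧ 3 ≤ y.val)

/-- Finite graphs represented on the vertex sets `Fin n`. -/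
abbrev GraphOn := Σ n : ℕ, SimpleGraph (Fin n)

/-- `H` is isomorphic to an induced subgraph of `G`. -/
def IsIndSubgraph (H G : GraphOn) : Prop :=
  ∃ s : Set (Fin G.1), Nonempty (H.2 ≃g G.2.induce s)

/-- The sequence `x_n(ε)` from the paper. -/
noncomputable def xseq (ε : ℝ) : ℕ → ℤ
  | 0 => max ⌊2 - Real.logb 2 (1 - ε)⌋ 5
  | n + 1 => 2 ^ (8 * (n + 1) + 10) *
      ⌊(xseq ε n : ℝ) - Real.logb 2 (1 - Int.fract ((2 : ℝ) ^ (xseq ε n) * ε / 2)) + 1⌋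



section Aux
open Matrix



section Toolkit
variable {F : Type*} [Field F]
variable {m n m' n' : Type*}


lemma rank_def [Fintype n] (M : Matrix m n F) :
    M.rank = Module.finrank F (LinearMap.range M.mulVecLin) := rfl

lemma pickRows_mul [Fintype m] [Fintype n] (M : Matrix m n F) (f : m' → m) :
    (Matrix.of fun (i : m') (k : m) => if f i = k then (1 : F) else 0) * M
      = M.submatrix f id := by
  ext i j
  simp [Matrix.mul_apply, ite_mul]

lemma mul_pickCols [Fintype n] (M : Matrix m n F) (g : n' → n) :
    M * (Matrix.of fun (k : n) (j : n') => if g j = k then (1 : F) else 0)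
      = M.submatrix id g := by
  ext i j
  simp [Matrix.mul_apply, mul_ite]

lemma rank_submatrix_le' [Fintype m] [Fintype n] [Fintype n'] (M : Matrix m n F)
    (f : m' → m) (g : n' → n) : (M.submatrix f g).rank ≤ M.rank := by
  have h : M.submatrix f g
      = (Matrix.of fun (i : m') (k : m) => if f i = k then (1 : F) else 0) * M *
        (Matrix.of fun (k : n) (j : n') => if g j = k then (1 : F) else 0) := by
    rw [pickRows_mul, mul_pickCols, Matrix.submatrix_submatrix]
    rfl
  rw [h]
  exact (Matrix.rank_mul_le_left _ _).trans (Matrix.rank_mul_le_right _ _)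


end Toolkit

variable {V : Type*} [Fintype V] [DecidableEq V] (G : SimpleGraph V)

/-- adjacency submatrix between two finsets -/
noncomputable def cm (P Q : Finset V) : Matrix ↑P ↑Q (ZMod 2) :=
  Matrix.of fun i j => if G.Adj i.1 j.1 then (1 : ZMod 2) else 0

lemma cutRank_eq (X : Finset V) : cutRank G X = (cm G X Xᶜ).rank := rfl

lemma cm_transpose (P Q : Finset V) : (cm G P Q)ᵀ = cm G Q P := by
  ext i j
  simp only [Matrix.transpose_apply, cm, Matrix.of_apply]
  exact if_congr (G.adj_comm _ _) rfl rfl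

lemma rank_cm_comm (P Q : Finset V) : (cm G P Q).rank = (cm G Q P).rank := by
  rw [← cm_transpose, Matrix.rank_transpose]

lemma rank_cm_mono {P' P Q' Q : Finset V} (hP : P' ⊆ P) (hQ : Q' ⊆ Q) :
    (cm G P' Q').rank ≤ (cm G P Q).rank := by
  have h : cm G P' Q' = (cm G P Q).submatrix
      (fun i => (⟨i.1, hP i.2⟩ : ↑P)) (fun j => (⟨j.1, hQ j.2⟩ : ↑Q)) := rfl
  rw [h]
  exact rank_submatrix_le' _ _ _

lemma rank_def' {n m : Type*} [Fintype n] (M : Matrix m n (ZMod 2)) :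
    M.rank = Module.finrank (ZMod 2) (LinearMap.range M.mulVecLin) := rfl

lemma rank_cm_colsplit (P : Finset V) {T Q : Finset V} (hT : T ⊆ Q) :
    (cm G P Q).rank ≤ (cm G P T).rank + (cm G P (Q \ T)).rank := by
  have hle : LinearMap.range (cm G P Q).mulVecLin ≤
      LinearMap.range (cm G P T).mulVecLin ⊔ LinearMap.range (cm G P (Q \ T)).mulVecLin := by
    rintro x ⟨v, rfl⟩
    apply Submodule.mem_sup.2
    refine ⟨(cm G P T).mulVec (fun j => v ⟨j.1, hT j.2⟩), ⟨_, rfl⟩,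
      (cm G P (Q \ T)).mulVec (fun j => v ⟨j.1, (Finset.mem_sdiff.1 j.2).1⟩), ⟨_, rfl⟩, ?_⟩
    funext i
    show (cm G P T).mulVec _ i + (cm G P (Q \ T)).mulVec _ i = (cm G P Q).mulVec v i
    simp only [Matrix.mulVec, dotProduct, cm, Matrix.of_apply]
    set w : V → ZMod 2 := fun z =>
      if h : z ∈ Q then (if G.Adj i.1 z then 1 else 0) * v ⟨z, h⟩ else 0 with hw
    have h1 : ∀ (S : Finset V) (hS : S ⊆ Q),
        (∑ j : ↑S, (if G.Adj i.1 j.1 then (1 : ZMod 2) else 0) * v ⟨j.1, hS j.2⟩)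
          = ∑ z ∈ S, w z := by
      intro S hS
      rw [← Finset.sum_coe_sort S w]
      refine Finset.sum_congr rfl fun j _ => ?_
      rw [hw]
      simp only [dif_pos (hS j.2)]
    have h2 : (∑ j : ↑Q, (if G.Adj i.1 j.1 then (1 : ZMod 2) else 0) * v j) = ∑ z ∈ Q, w z := by
      rw [← Finset.sum_coe_sort Q w]
      refine Finset.sum_congr rfl fun j _ => ?_
      rw [hw]
      simp only [dif_pos j.2]
    rw [h1 T hT, h1 (Q \ T) (Finset.sdiff_subset), h2, add_comm]
    exact Finset.sum_sdiff hT
  calc (cm G P Q).rank ≤ Module.finrank (ZMod 2)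
        ↥(LinearMap.range (cm G P T).mulVecLin ⊔ LinearMap.range (cm G P (Q \ T)).mulVecLin) :=
        Submodule.finrank_mono hle
    _ ≤ _ := Submodule.finrank_add_le_finrank_add_finrank _ _

lemma rank_cm_rowsplit (Q : Finset V) {S P : Finset V} (hS : S ⊆ P) :
    (cm G P Q).rank ≤ (cm G S Q).rank + (cm G (P \ S) Q).rank := by
  rw [rank_cm_comm G P Q, rank_cm_comm G S Q, rank_cm_comm G (P \ S) Q]
  exact rank_cm_colsplit G Q hS


open scoped symmDiff in
lemma key5 (Z X : Finset V) : cutRank G Z ≤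
    cutRank G (X ∆ Zᶜ) + cutRank G X + cutRank G Xᶜ + cutRank G (X ∆ Z) := by
  have h0 : (cm G Z Zᶜ).rank ≤ (cm G (Z ∩ X) Zᶜ).rank + (cm G (Z \ (Z ∩ X)) Zᶜ).rank :=
    rank_cm_rowsplit G Zᶜ Finset.inter_subset_left
  have h1 : (cm G (Z ∩ X) Zᶜ).rank ≤
      (cm G (Z ∩ X) (Zᶜ ∩ X)).rank + (cm G (Z ∩ X) (Zᶜ \ (Zᶜ ∩ X))).rank :=
    rank_cm_colsplit G _ Finset.inter_subset_left
  have h2 : (cm G (Z \ (Z ∩ X)) Zᶜ).rank ≤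
      (cm G (Z \ (Z ∩ X)) (Zᶜ ∩ X)).rank + (cm G (Z \ (Z ∩ X)) (Zᶜ \ (Zᶜ ∩ X))).rank :=
    rank_cm_colsplit G _ Finset.inter_subset_left
  have ha : (cm G (Z ∩ X) (Zᶜ ∩ X)).rank ≤ (cm G (X ∆ Zᶜ) (X ∆ Zᶜ)ᶜ).rank := by
    refine rank_cm_mono G ?_ ?_ <;> intro a ha <;>
      simp only [Finset.mem_inter, Finset.mem_compl, Finset.mem_symmDiff] at * <;> tauto
  have hb : (cm G (Z ∩ X) (Zᶜ \ (Zᶜ ∩ X))).rank ≤ (cm G X Xᶜ).rank := by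
    refine rank_cm_mono G ?_ ?_ <;> intro a ha <;>
      simp only [Finset.mem_inter, Finset.mem_compl, Finset.mem_sdiff] at * <;> tauto
  have hc : (cm G (Z \ (Z ∩ X)) (Zᶜ ∩ X)).rank ≤ (cm G Xᶜ Xᶜᶜ).rank := by
    refine rank_cm_mono G ?_ ?_ <;> intro a ha <;>
      simp only [Finset.mem_inter, Finset.mem_compl, Finset.mem_sdiff, compl_compl] at * <;>
      tauto
  have hd : (cm G (Z \ (Z ∩ X)) (Zᶜ \ (Zᶜ ∩ X))).rank ≤ (cm G (X ∆ Z) (X ∆ Z)ᶜ).rank := by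
    refine rank_cm_mono G ?_ ?_ <;> intro a ha <;>
      simp only [Finset.mem_inter, Finset.mem_compl, Finset.mem_sdiff, Finset.mem_symmDiff]
        at * <;> tauto
  simp only [cutRank_eq]
  omega




open scoped symmDiff in
lemma max_le_four_avg : (maxCutRank G : ℝ) ≤ 4 * avgCutRank G := by
  obtain ⟨Z, -, hZ⟩ := Finset.exists_mem_eq_sup (Finset.univ : Finset (Finset V))
    ⟨∅, Finset.mem_univ _⟩ (cutRank G)
  have hi1 : Function.Involutive (fun X : Finset V => X ∆ Zᶜ) := fun X => by
    simp [symmDiff_symmDiff_cancel_right]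
  have hi2 : Function.Involutive (fun X : Finset V => X ∆ Z) := fun X => by
    simp [symmDiff_symmDiff_cancel_right]
  have hi3 : Function.Involutive (fun X : Finset V => Xᶜ) := fun X => compl_compl X
  have e1 : ∑ X : Finset V, cutRank G (X ∆ Zᶜ) = ∑ X : Finset V, cutRank G X := by
    simpa using Equiv.sum_comp hi1.toPerm (cutRank G)
  have e2 : ∑ X : Finset V, cutRank G (X ∆ Z) = ∑ X : Finset V, cutRank G X := by
    simpa using Equiv.sum_comp hi2.toPerm (cutRank G)
  have e3 : ∑ X : Finset V, cutRank G Xᶜ = ∑ X : Finset V, cutRank G X := by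
    simpa using Equiv.sum_comp hi3.toPerm (cutRank G)
  have hnat : 2 ^ Fintype.card V * maxCutRank G ≤ 4 * ∑ X : Finset V, cutRank G X := by
    calc 2 ^ Fintype.card V * maxCutRank G = ∑ _X : Finset V, maxCutRank G := by
          rw [Finset.sum_const, smul_eq_mul, Finset.card_univ, Fintype.card_finset]
      _ ≤ ∑ X : Finset V, (cutRank G (X ∆ Zᶜ) + cutRank G X + cutRank G Xᶜ
            + cutRank G (X ∆ Z)) := Finset.sum_le_sum fun X _ => by
            rw [maxCutRank, hZ]; exact key5 G Z X
      _ = 4 * ∑ X : Finset V, cutRank G X := by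
          simp only [Finset.sum_add_distrib, e1, e2, e3]; ring
  have hpos : (0:ℝ) < 2 ^ Fintype.card V := by positivity
  rw [avgCutRank, mul_div_assoc', le_div_iff₀ hpos]
  calc (maxCutRank G : ℝ) * 2 ^ Fintype.card V
      = ((2 ^ Fintype.card V * maxCutRank G : ℕ) : ℝ) := by push_cast; ring
    _ ≤ ((4 * ∑ X : Finset V, cutRank G X : ℕ) : ℝ) := by exact_mod_cast hnat
    _ = 4 * ∑ X : Finset V, (cutRank G X : ℝ) := by push_cast; rfl

lemma cutRank_empty : cutRank G ∅ = 0 := by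
  have := Matrix.rank_le_card_height (cm G ∅ ∅ᶜ)
  simpa [cutRank_eq] using this

lemma one_le_maxCutRank (hE : ∃ x y, G.Adj x y) : 1 ≤ maxCutRank G := by
  obtain ⟨x, y, hxy⟩ := hE
  have hy : y ∈ ({x} : Finset V)ᶜ := by
    simp [Finset.mem_compl, hxy.ne']
  have h1 : 1 ≤ cutRank G {x} := by
    rw [cutRank_eq]
    have hmem : ((cm G {x} ({x} : Finset V)ᶜ).mulVec (Pi.single ⟨y, hy⟩ 1)) ∈
        LinearMap.range (cm G {x} ({x} : Finset V)ᶜ).mulVecLin := ⟨_, rfl⟩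
    have hne : ((cm G {x} ({x} : Finset V)ᶜ).mulVec (Pi.single ⟨y, hy⟩ 1)) ≠ 0 := by
      intro h
      have hx : x ∈ ({x} : Finset V) := Finset.mem_singleton_self x
      have := congrFun h ⟨x, hx⟩
      rw [Matrix.mulVec_single] at this
      simp only [cm, Matrix.of_apply, if_pos hxy, one_mul, Pi.zero_apply] at this
      exact one_ne_zero (α := ZMod 2) (by simpa [hxy] using this)
    have : 0 < Module.finrank (ZMod 2)
        ↥(LinearMap.range (cm G {x} ({x} : Finset V)ᶜ).mulVecLin) :=
      Module.finrank_pos_iff_exists_ne_zero.2 ⟨⟨_, hmem⟩, fun h => hne (by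
        simpa using congrArg Subtype.val h)⟩
    exact this
  exact h1.trans (Finset.le_sup (Finset.mem_univ _))

lemma avg_lt_max (hE : ∃ x y, G.Adj x y) : avgCutRank G < (maxCutRank G : ℝ) := by
  have hpos : (0:ℝ) < 2 ^ Fintype.card V := by positivity
  rw [avgCutRank, div_lt_iff₀ hpos]
  have hlt : ∑ X : Finset V, (cutRank G X : ℝ) <
      ∑ _X : Finset V, (maxCutRank G : ℝ) := by
    refine Finset.sum_lt_sum (fun X _ => ?_) ⟨∅, Finset.mem_univ _, ?_⟩
    · have h : cutRank G X ≤ maxCutRank G := Finset.le_sup (Finset.mem_univ _)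
      exact_mod_cast h
    · rw [cutRank_empty]
      have h := one_le_maxCutRank G hE
      exact_mod_cast h
  calc ∑ X : Finset V, (cutRank G X : ℝ) < ∑ _X : Finset V, (maxCutRank G : ℝ) := hlt
    _ = (maxCutRank G : ℝ) * 2 ^ Fintype.card V := by
        rw [Finset.sum_const, Finset.card_univ, Fintype.card_finset, nsmul_eq_mul]; push_cast; ring



lemma zmod2_eq_one {a : ZMod 2} (h : a ≠ 0) : a = 1 := by
  revert h; revert a; decide

lemma exists_min_matrix : ∃ A : Matrix V V (ZMod 2), A.IsSymm ∧
    (∀ i j, i ≠ j → (A i j ≠ 0 ↔ G.Adj i j)) ∧ A.rank = minRank (ZMod 2) G := by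
  have hne : { r : ℕ | ∃ A : Matrix V V (ZMod 2), A.IsSymm ∧
      (∀ i j, i ≠ j → (A i j ≠ 0 ↔ G.Adj i j)) ∧ A.rank = r }.Nonempty := by
    refine ⟨_, Matrix.of (fun i j => if G.Adj i j then (1 : ZMod 2) else 0), ?_, ?_, rfl⟩
    · ext i j
      simp only [Matrix.transpose_apply, Matrix.of_apply]
      exact if_congr (G.adj_comm _ _) rfl rfl
    · intro i j _
      by_cases hadj : G.Adj i j <;> simp [hadj]
  have := Nat.sInf_mem hne
  obtain ⟨A, h1, h2, h3⟩ := this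
  exact ⟨A, h1, h2, h3⟩

lemma max_le_minRank : maxCutRank G ≤ minRank (ZMod 2) G := by
  obtain ⟨A, _, hfit, hrank⟩ := exists_min_matrix G
  refine Finset.sup_le fun X _ => ?_
  rw [← hrank, cutRank_eq]
  have hmat : cm G X Xᶜ = A.submatrix (Subtype.val : ↑X → V) (Subtype.val : ↑(Xᶜ) → V) := by
    ext ⟨i, hi⟩ ⟨j, hj⟩
    have hij : i ≠ j := fun h => (Finset.mem_compl.1 hj) (h ▸ hi)
    by_cases hadj : G.Adj i j
    · have : A i j = 1 := zmod2_eq_one ((hfit i j hij).2 hadj)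
      simp [cm, hadj, this]
    · have : A i j = 0 := by
        by_contra h
        exact hadj ((hfit i j hij).1 h)
      simp [cm, hadj, this]
  rw [hmat]
  exact rank_submatrix_le' A _ _




section Twins
variable {G}

lemma twinEq_refl (x : V) : TwinEq G x x := Or.inl rfl

lemma twinEq_symm {a b : V} (h : TwinEq G a b) : TwinEq G b a :=
  h.imp Eq.symm (fun h' z hzb hza => (h' z hza hzb).symm)

lemma adj_congr {a b : V} (h : TwinEq G a b) {z : V} (hz1 : z ≠ a) (hz2 : z ≠ b) :
    G.Adj a z ↔ G.Adj b z := by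
  rcases h with rfl | h
  · exact Iff.rfl
  · exact h z hz1 hz2

lemma twinEq_trans {a b c : V} (hab : TwinEq G a b) (hbc : TwinEq G b c) : TwinEq G a c := by
  rcases eq_or_ne a b with rfl | hab'
  · exact hbc
  rcases eq_or_ne b c with rfl | hbc'
  · exact hab
  rcases eq_or_ne a c with rfl | hac'
  · exact Or.inl rfl
  right
  intro w hwa hwc
  rcases eq_or_ne w b with rfl | hwb
  · have h1 : G.Adj w a ↔ G.Adj c a := adj_congr hbc hab' hac'
    have h2 : G.Adj a c ↔ G.Adj w c := adj_congr hab (Ne.symm hac') (Ne.symm hbc')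
    calc G.Adj a w ↔ G.Adj w a := G.adj_comm _ _
      _ ↔ G.Adj c a := h1
      _ ↔ G.Adj a c := G.adj_comm _ _
      _ ↔ G.Adj w c := h2
      _ ↔ G.Adj c w := G.adj_comm _ _
  · exact (adj_congr hab hwa hwb).trans (adj_congr hbc hwb hwc)

end Twins

noncomputable def classOf (G : SimpleGraph V) (x : V) : Finset V :=
  Finset.univ.filter fun y => TwinEq G x y

variable {G} in
lemma mem_classOf {x y : V} : y ∈ classOf G x ↔ TwinEq G x y := by
  simp [classOf]

lemma classOf_eq_of_twinEq {x y : V} (h : TwinEq G x y) : classOf G x = classOf G y := by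
  ext z
  simp only [mem_classOf]
  exact ⟨fun h' => twinEq_trans (twinEq_symm h) h', fun h' => twinEq_trans h h'⟩

lemma twinEq_of_classOf_eq {x y : V} (h : classOf G x = classOf G y) : TwinEq G x y := by
  have : y ∈ classOf G x := h ▸ mem_classOf.2 (twinEq_refl y)
  exact mem_classOf.1 this

lemma classOf_self (x : V) : x ∈ classOf G x := mem_classOf.2 (twinEq_refl x)

lemma clique_expand {a x y : V} (hx : TwinEq G a x) (hy : TwinEq G a y) (hxy : x ≠ y)
    (hadj : G.Adj x y) : ∀ u w, TwinEq G a u → TwinEq G a w → u ≠ w → G.Adj u w := by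
  obtain ⟨t0, ht0a, ht0tw, ht0adj⟩ : ∃ t, t ≠ a ∧ TwinEq G a t ∧ G.Adj a t := by
    rcases eq_or_ne a x with rfl | hax
    · exact ⟨y, hadj.ne', hy, hadj⟩
    rcases eq_or_ne a y with rfl | hay
    · exact ⟨x, hadj.ne, hx, hadj.symm⟩
    · have : G.Adj a y := (adj_congr (twinEq_symm hx) (Ne.symm hxy) (Ne.symm hay)).1 hadj
      exact ⟨y, hay.symm, hy, this⟩
  have hB : ∀ t, TwinEq G a t → t ≠ a → G.Adj a t := by
    intro t hta hta'
    rcases eq_or_ne t t0 with rfl | htt0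
    · exact ht0adj
    · have htw : TwinEq G t0 t := twinEq_trans (twinEq_symm ht0tw) hta
      exact ((adj_congr htw (Ne.symm ht0a) (Ne.symm hta')).1 ht0adj.symm).symm
  intro u w hu hw huw
  rcases eq_or_ne u a with rfl | hua
  · exact hB w hw (Ne.symm huw)
  rcases eq_or_ne w a with rfl | hwa
  · exact (hB u hu hua).symm
  · have haw : G.Adj a w := hB w hw hwa
    exact (adj_congr hu hwa (Ne.symm huw)).1 haw

/-- whether a set is a "clique class" -/
def cliqueCls (G : SimpleGraph V) (C : Finset V) : Prop :=
  ∃ x ∈ C, ∃ y ∈ C, x ≠ y ∧ G.Adj x y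

def adjBtw (G : SimpleGraph V) (C D : Finset V) : Prop :=
  ∃ x ∈ C, ∃ y ∈ D, G.Adj x y

noncomputable def gmat (G : SimpleGraph V) (C D : Finset V) : ZMod 2 :=
  if C = D then (if cliqueCls G C then 1 else 0) else (if adjBtw G C D then 1 else 0)

lemma gmat_symm (C D : Finset V) : gmat G C D = gmat G D C := by
  rcases eq_or_ne C D with rfl | hCD
  · rfl
  · rw [gmat, gmat, if_neg hCD, if_neg (Ne.symm hCD)]
    refine if_congr ?_ rfl rfl
    constructor <;> rintro ⟨x, hx, y, hy, h⟩ <;> exact ⟨y, hy, x, hx, h.symm⟩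

noncomputable def Amat (G : SimpleGraph V) : Matrix V V (ZMod 2) :=
  Matrix.of fun i j => gmat G (classOf G i) (classOf G j)

lemma Amat_isSymm : (Amat G).IsSymm := by
  ext i j
  exact gmat_symm G _ _

lemma Amat_fit : ∀ i j : V, i ≠ j → (Amat G i j ≠ 0 ↔ G.Adj i j) := by
  intro i j hij
  rcases eq_or_ne (classOf G i) (classOf G j) with hr | hr
  · have htw : TwinEq G i j := twinEq_of_classOf_eq G hr
    have hAij : Amat G i j = if cliqueCls G (classOf G i) then 1 else 0 := by
      simp [Amat, gmat, hr]
    rw [hAij]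
    have hiff : cliqueCls G (classOf G i) ↔ G.Adj i j := by
      constructor
      · rintro ⟨x, hx, y, hy, hxy, hadj⟩
        exact clique_expand G (mem_classOf.1 hx) (mem_classOf.1 hy) hxy hadj i j
          (twinEq_refl i) htw hij
      · intro hadj
        exact ⟨i, classOf_self G i, j, mem_classOf.2 htw, hij, hadj⟩
    by_cases h : cliqueCls G (classOf G i) <;> simp [h, ← hiff]
  · have hntw : ¬ TwinEq G i j := fun h => hr (classOf_eq_of_twinEq G h)
    have hAij : Amat G i j = if adjBtw G (classOf G i) (classOf G j) then 1 else 0 := by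
      simp [Amat, gmat, hr]
    rw [hAij]
    have hiff : adjBtw G (classOf G i) (classOf G j) ↔ G.Adj i j := by
      constructor
      · rintro ⟨x, hx, y, hy, hadj⟩
        have hix : TwinEq G i x := mem_classOf.1 hx
        have hjy : TwinEq G j y := mem_classOf.1 hy
        have hyi : y ≠ i := by
          rintro rfl
          exact hntw (twinEq_symm hjy)
        have hyx : y ≠ x := by
          rintro rfl
          exact hntw (twinEq_trans hix (twinEq_symm hjy))
        have h1 : G.Adj x y ↔ G.Adj i y := (adj_congr (twinEq_symm hix) hyx hyi).symm.symm
        have h2 : G.Adj y i ↔ G.Adj j i := adj_congr (twinEq_symm hjy) (Ne.symm hyi) hij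
        have : G.Adj i y := h1.1 hadj
        exact ((h2.1 this.symm).symm : G.Adj i j)
      · intro hadj
        exact ⟨i, classOf_self G i, j, classOf_self G j, hadj⟩
    by_cases h : adjBtw G (classOf G i) (classOf G j) <;> simp [h, ← hiff]

lemma card_image_le_of_factor {α β γ : Type*} [Fintype α] [DecidableEq β] [DecidableEq γ]
    (f : α → β) (g : α → γ) (h : ∀ x y, f x = f y → g x = g y) :
    (Finset.univ.image g).card ≤ (Finset.univ.image f).card := by
  cases isEmpty_or_nonempty α
  · simp [Finset.univ_eq_empty]
  · have himg : Finset.univ.image g = (Finset.univ.image f).image (g ∘ Function.invFun f) := by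
      rw [Finset.image_image]
      refine Finset.image_congr fun x _ => ?_
      exact (h _ _ (Function.invFun_eq ⟨x, rfl⟩)).symm
    rw [himg]
    exact Finset.card_image_le

lemma nd_eq_card_image_classOf : nd G = (Finset.univ.image (classOf G)).card := rfl

lemma Amat_rank_le : (Amat G).rank ≤ nd G := by
  set I : Finset (Finset V) := Finset.univ.image (classOf G) with hI
  have hfact : Amat G =
      (Matrix.of fun (i : V) (c : ↑I) => if classOf G i = c.1 then (1 : ZMod 2) else 0) *
      (Matrix.of fun (c : ↑I) (j : V) => gmat G c.1 (classOf G j)) := by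
    ext i j
    rw [Matrix.mul_apply]
    have hc0 : (classOf G i) ∈ I := Finset.mem_image_of_mem _ (Finset.mem_univ i)
    rw [Finset.sum_eq_single (⟨classOf G i, hc0⟩ : ↑I)]
    · simp [Amat]
    · intro b _ hb
      have : classOf G i ≠ b.1 := fun h => hb (Subtype.ext h.symm)
      simp [this]
    · intro h
      exact absurd (Finset.mem_univ _) h
  calc (Amat G).rank ≤ (Matrix.of fun (c : ↑I) (j : V) => gmat G c.1 (classOf G j)).rank := by
        rw [hfact]
        exact Matrix.rank_mul_le_right _ _
    _ ≤ Fintype.card ↑I := Matrix.rank_le_card_height _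
    _ = I.card := Fintype.card_coe I
    _ = nd G := rfl

lemma minRank_le_nd : minRank (ZMod 2) G ≤ nd G :=
  le_trans (Nat.sInf_le ⟨Amat G, Amat_isSymm G, Amat_fit G, rfl⟩) (Amat_rank_le G)


/-! ### Part 4: neighborhood diversity bound -/

/-- indicator vector of the neighbourhood of `u` outside `X` -/
noncomputable def av (G : SimpleGraph V) (u : V) (X : Finset V) : V → ZMod 2 :=
  fun z => if z ∉ X ∧ G.Adj u z then 1 else 0

def indep (G : SimpleGraph V) (X : Finset V) : Prop :=
  LinearIndependent (ZMod 2) (fun u : ↑X => av G u.1 X)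

lemma indep_empty : indep G ∅ := by
  have : IsEmpty ↑(∅ : Finset V) := by
    exact Finset.isEmpty_coe_sort.2 rfl
  exact linearIndependent_empty_type

lemma zmod2_add_eq_zero {a b : ZMod 2} (h : a + b = 0) : a = b := by
  revert h; revert a b; decide

lemma zmod2_mul_ind (a : ZMod 2) (p : Prop) :
    a * (if p then (1 : ZMod 2) else 0) = if a ≠ 0 then (if p then (1:ZMod 2) else 0) else 0 := by
  rcases eq_or_ne a 0 with rfl | ha
  · simp
  · rw [if_pos ha, zmod2_eq_one ha, one_mul]

lemma ind_inj {p q : Prop} (h : (if p then (1 : ZMod 2) else 0) = (if q then 1 else 0)) :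
    p ↔ q := by
  by_cases hp : p <;> by_cases hq : q <;> simp_all

/-- number of linearly independent rows is at most the cut-rank -/
lemma card_le_cutRank_of_indep {X : Finset V} (h : indep G X) : X.card ≤ cutRank G X := by
  rw [cutRank_eq, rank_cm_comm]
  have hzero : ∀ c : ↑X → ZMod 2, (cm G Xᶜ X).mulVecLin c = 0 → c = 0 := by
    intro c hc
    have hsum : (∑ u : ↑X, c u • av G u.1 X) = 0 := by
      funext z
      simp only [Finset.sum_apply, Pi.smul_apply, smul_eq_mul, Pi.zero_apply]
      by_cases hz : z ∈ X
      · simp [av, hz]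
      · have hz' : z ∈ Xᶜ := Finset.mem_compl.2 hz
        have h0 := congrFun hc ⟨z, hz'⟩
        simp only [Matrix.mulVecLin_apply, Matrix.mulVec, dotProduct, cm,
          Matrix.of_apply, Pi.zero_apply] at h0
        rw [← h0]
        refine Finset.sum_congr rfl fun u _ => ?_
        rw [mul_comm]
        congr 1
        simp only [av, hz, not_false_iff, true_and]
        exact if_congr (G.adj_comm _ _) rfl rfl
    have := Fintype.linearIndependent_iff.1 h c hsum
    funext i
    exact this i
  have hinj : Function.Injective (cm G Xᶜ X).mulVecLin :=
    LinearMap.ker_eq_bot.1 (LinearMap.ker_eq_bot'.2 hzero)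
  have := LinearMap.finrank_range_of_inj hinj
  rw [rank_def', this, Module.finrank_pi, Fintype.card_coe]


section Part4

variable {G}
variable {X : Finset V} (cf : V → V → ZMod 2)

/-- classification map -/
noncomputable def psi (X : Finset V) (cf : V → V → ZMod 2) (G : SimpleGraph V) :
    V → (Finset V × Finset V) ⊕ (Finset V ⊕ V) := fun v =>
  if v ∈ X then Sum.inr (Sum.inr v)
  else if cf v v ≠ 0 then
    Sum.inl (X.filter (fun w => cf v w ≠ 0), X.filter (fun w => G.Adj v w))
  else Sum.inr (Sum.inl (X.filter (fun w => cf v w ≠ 0)))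

lemma heq1 (hgood : ∀ v ∉ X, (∑ w ∈ insert v X, cf v w • av G w (insert v X)) = 0 ∧
      ∃ w ∈ insert v X, cf v w ≠ 0)
    (v : V) (hv : v ∉ X) (hcv : cf v v ≠ 0) {z : V} (hz : z ∉ X) (hzv : z ≠ v) :
    (if G.Adj v z then (1:ZMod 2) else 0)
      = ∑ w ∈ X.filter (fun w => cf v w ≠ 0), (if G.Adj w z then 1 else 0) := by
  obtain ⟨hsum, -⟩ := hgood v hv
  have hz' : z ∉ insert v X := by simp [hz, hzv]
  have h0 := congrFun hsum z
  simp only [Finset.sum_apply, Pi.smul_apply, smul_eq_mul, Pi.zero_apply] at h0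
  have hav : ∀ w, av G w (insert v X) z = (if G.Adj w z then (1:ZMod 2) else 0) := by
    intro w; simp [av, hz']
  rw [Finset.sum_insert hv, hav v, zmod2_eq_one hcv, one_mul] at h0
  rw [zmod2_add_eq_zero h0, Finset.sum_filter]
  refine Finset.sum_congr rfl fun w _ => ?_
  rw [hav w, zmod2_mul_ind]

lemma heq2 (hgood : ∀ v ∉ X, (∑ w ∈ insert v X, cf v w • av G w (insert v X)) = 0 ∧
      ∃ w ∈ insert v X, cf v w ≠ 0)
    (v : V) (hv : v ∉ X) (hcv : cf v v = 0) :
    (X.filter (fun w => cf v w ≠ 0)).Nonempty ∧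
    ∀ z, z ≠ v → (∑ w ∈ X.filter (fun w => cf v w ≠ 0), av G w X) z = 0 := by
  obtain ⟨hsum, ⟨w0, hw0mem, hw0⟩⟩ := hgood v hv
  constructor
  · have hw0' : w0 ∈ X := by
      rcases Finset.mem_insert.1 hw0mem with rfl | h
      · exact absurd hcv hw0
      · exact h
    exact ⟨w0, Finset.mem_filter.2 ⟨hw0', hw0⟩⟩
  · intro z hzv
    simp only [Finset.sum_apply]
    by_cases hz : z ∈ X
    · refine Finset.sum_eq_zero fun w _ => ?_
      simp [av, hz]
    · have hz' : z ∉ insert v X := by simp [hz, hzv]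
      have h0 := congrFun hsum z
      simp only [Finset.sum_apply, Pi.smul_apply, smul_eq_mul, Pi.zero_apply] at h0
      rw [Finset.sum_insert hv, hcv, zero_mul, zero_add] at h0
      have hstep : ∑ w ∈ X.filter (fun w => cf v w ≠ 0), av G w X z
          = ∑ w ∈ X, cf v w * av G w (insert v X) z := by
        rw [Finset.sum_filter]
        refine Finset.sum_congr rfl fun w _ => ?_
        have hav1 : av G w (insert v X) z = (if G.Adj w z then (1:ZMod 2) else 0) := by
          simp [av, hz']
        have hav2 : av G w X z = (if G.Adj w z then (1:ZMod 2) else 0) := by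
          simp [av, hz]
        rw [hav1, hav2, zmod2_mul_ind]
      rw [hstep]
      exact h0

lemma case2_inj (hXind : indep G X)
    (hgood : ∀ v ∉ X, (∑ w ∈ insert v X, cf v w • av G w (insert v X)) = 0 ∧
      ∃ w ∈ insert v X, cf v w ≠ 0)
    {u v : V} (hu : u ∉ X) (hv : v ∉ X) (hcu : cf u u = 0) (hcv : cf v v = 0)
    (hT : X.filter (fun w => cf u w ≠ 0) = X.filter (fun w => cf v w ≠ 0)) : u = v := by
  by_contra huv
  obtain ⟨hne, hu0⟩ := heq2 cf hgood u hu hcu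
  obtain ⟨-, hv0⟩ := heq2 cf hgood v hv hcv
  rw [← hT] at hv0
  have hzero : (∑ w ∈ X.filter (fun w => cf u w ≠ 0), av G w X) = 0 := by
    funext z
    rcases eq_or_ne z u with rfl | hzu
    · rw [Pi.zero_apply, hv0 z huv]
    · rw [Pi.zero_apply, hu0 z hzu]
  have hsubT : X.filter (fun w => cf u w ≠ 0) ⊆ X := Finset.filter_subset _ _
  have hd : (∑ w : ↑X, (if w.1 ∈ X.filter (fun w => cf u w ≠ 0) then (1:ZMod 2) else 0)
      • av G w.1 X) = 0 := by
    calc ∑ w : ↑X, (if w.1 ∈ X.filter (fun w => cf u w ≠ 0) then (1:ZMod 2) else 0)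
          • av G w.1 X
        = ∑ w ∈ X, (if w ∈ X.filter (fun w => cf u w ≠ 0) then (1:ZMod 2) else 0)
          • av G w X := Finset.sum_coe_sort X
            (fun w => (if w ∈ X.filter (fun w => cf u w ≠ 0) then (1:ZMod 2) else 0) • av G w X)
      _ = ∑ w ∈ X, (if w ∈ X.filter (fun w => cf u w ≠ 0) then av G w X else 0) := by
          refine Finset.sum_congr rfl fun w _ => ?_
          split_ifs <;> simp
      _ = ∑ w ∈ X.filter (· ∈ X.filter (fun w => cf u w ≠ 0)), av G w X :=
          (Finset.sum_filter _ _).symm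
      _ = ∑ w ∈ X.filter (fun w => cf u w ≠ 0), av G w X := by
          congr 1
          rw [Finset.filter_mem_eq_inter]
          exact Finset.inter_eq_right.2 hsubT
      _ = 0 := hzero
  have hall := Fintype.linearIndependent_iff.1 hXind _ hd
  obtain ⟨w0, hw0⟩ := hne
  have := hall ⟨w0, hsubT hw0⟩
  rw [if_pos hw0] at this
  exact one_ne_zero this

lemma psi_consistent (hXind : indep G X)
    (hgood : ∀ v ∉ X, (∑ w ∈ insert v X, cf v w • av G w (insert v X)) = 0 ∧
      ∃ w ∈ insert v X, cf v w ≠ 0) :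
    ∀ u v, psi X cf G u = psi X cf G v → classOf G u = classOf G v := by
  intro u v h
  by_cases hu : u ∈ X <;> by_cases hv : v ∈ X
  · simp only [psi, if_pos hu, if_pos hv, Sum.inr.injEq] at h
    rw [h]
  · simp only [psi, if_pos hu, if_neg hv] at h
    by_cases hcv : cf v v ≠ 0
    · rw [if_pos hcv] at h
      exact absurd h (by simp)
    · rw [if_neg hcv] at h
      exact absurd h (by simp)
  · simp only [psi, if_neg hu, if_pos hv] at h
    by_cases hcu : cf u u ≠ 0
    · rw [if_pos hcu] at h
      exact absurd h (by simp)
    · rw [if_neg hcu] at h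
      exact absurd h (by simp)
  · simp only [psi, if_neg hu, if_neg hv] at h
    by_cases hcu : cf u u ≠ 0 <;> by_cases hcv : cf v v ≠ 0
    rotate_left
    · rw [if_pos hcu, if_neg hcv] at h
      exact absurd h (by simp)
    · rw [if_neg hcu, if_pos hcv] at h
      exact absurd h (by simp)
    · rw [if_neg hcu, if_neg hcv] at h
      simp only [Sum.inr.injEq, Sum.inl.injEq] at h
      rw [case2_inj cf hXind hgood hu hv (not_not.1 hcu) (not_not.1 hcv) h]
    · -- both case 1
      rw [if_pos hcu, if_pos hcv] at h
      simp only [Sum.inl.injEq, Prod.mk.injEq] at h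
      obtain ⟨hT, hN⟩ := h
      refine classOf_eq_of_twinEq G ?_
      rcases eq_or_ne u v with rfl | huv
      · exact twinEq_refl u
      right
      intro z hzu hzv
      by_cases hz : z ∈ X
      · have hmem := Finset.ext_iff.1 hN z
        simp only [Finset.mem_filter, hz, true_and] at hmem
        exact hmem
      · have e1 := heq1 cf hgood u hu hcu (z := z) hz hzu
        have e2 := heq1 cf hgood v hv hcv (z := z) hz hzv
        rw [hT] at e1
        exact ind_inj (e1.trans e2.symm)

end Part4

lemma nd_lt_pow : nd G < 2 ^ (2 * maxCutRank G + 2) := by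
  obtain ⟨X, hXmem, hXmax⟩ := Finset.exists_max_image
    ((Finset.univ : Finset (Finset V)).filter (indep G)) Finset.card
    ⟨∅, Finset.mem_filter.2 ⟨Finset.mem_univ _, indep_empty G⟩⟩
  have hXind : indep G X := (Finset.mem_filter.1 hXmem).2
  have hcard : X.card ≤ maxCutRank G :=
    (card_le_cutRank_of_indep G hXind).trans (Finset.le_sup (Finset.mem_univ _))
  have hdep : ∀ v : V, ∃ c : V → ZMod 2, v ∉ X →
      ((∑ w ∈ insert v X, c w • av G w (insert v X)) = 0 ∧ ∃ w ∈ insert v X, c w ≠ 0) := by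
    intro v
    by_cases hv : v ∈ X
    · exact ⟨0, fun h => absurd hv h⟩
    · have hni : ¬ indep G (insert v X) := by
        intro hind
        have hle := hXmax _ (Finset.mem_filter.2 ⟨Finset.mem_univ _, hind⟩)
        rw [Finset.card_insert_of_notMem hv] at hle
        omega
      obtain ⟨c, hc0, i, hci⟩ := Fintype.not_linearIndependent_iff.1 hni
      refine ⟨fun w => if h : w ∈ insert v X then c ⟨w, h⟩ else 0,
        fun _ => ⟨?_, ⟨i.1, i.2, by simp [i.2, hci]⟩⟩⟩
      rw [← Finset.sum_coe_sort (insert v X)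
        (fun w => (if h : w ∈ insert v X then c ⟨w, h⟩ else 0) • av G w (insert v X))]
      rw [← hc0]
      refine Finset.sum_congr rfl fun w _ => ?_
      rw [dif_pos w.2]
  choose cf hcf using hdep
  have hgood : ∀ v ∉ X, (∑ w ∈ insert v X, cf v w • av G w (insert v X)) = 0 ∧
      ∃ w ∈ insert v X, cf v w ≠ 0 := fun v hv => hcf v hv
  set B : Finset ((Finset V × Finset V) ⊕ (Finset V ⊕ V)) :=
    ((X.powerset ×ˢ X.powerset).image Sum.inl ∪
      X.powerset.image (fun t => Sum.inr (Sum.inl t))) ∪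
      X.image (fun x => Sum.inr (Sum.inr x)) with hB
  have himg : Finset.univ.image (psi X cf G) ⊆ B := by
    intro s hs
    obtain ⟨v, -, rfl⟩ := Finset.mem_image.1 hs
    by_cases hv : v ∈ X
    · refine Finset.mem_union_right _ ?_
      simp only [psi, if_pos hv]
      exact Finset.mem_image_of_mem _ hv
    · by_cases hcv : cf v v ≠ 0
      · refine Finset.mem_union_left _ (Finset.mem_union_left _ ?_)
        simp only [psi, if_neg hv, if_pos hcv]
        refine Finset.mem_image_of_mem _ ?_
        exact Finset.mem_product.2 ⟨Finset.mem_powerset.2 (Finset.filter_subset _ _),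
          Finset.mem_powerset.2 (Finset.filter_subset _ _)⟩
      · refine Finset.mem_union_left _ (Finset.mem_union_right _ ?_)
        simp only [psi, if_neg hv, if_neg hcv]
        exact Finset.mem_image_of_mem _ (Finset.mem_powerset.2 (Finset.filter_subset _ _))
  have h1 : nd G ≤ B.card := by
    rw [nd_eq_card_image_classOf]
    exact le_trans (card_image_le_of_factor (psi X cf G) (classOf G)
      (psi_consistent cf hXind hgood)) (Finset.card_le_card himg)
  have h2 : B.card ≤ 2 ^ X.card * 2 ^ X.card + 2 ^ X.card + X.card := by
    refine le_trans (Finset.card_union_le _ _) ?_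
    have hb1 := Finset.card_union_le
      ((X.powerset ×ˢ X.powerset).image (Sum.inl :
        Finset V × Finset V → (Finset V × Finset V) ⊕ (Finset V ⊕ V)))
      (X.powerset.image (fun t => (Sum.inr (Sum.inl t) :
        (Finset V × Finset V) ⊕ (Finset V ⊕ V))))
    have hc1 : ((X.powerset ×ˢ X.powerset).image (Sum.inl :
        Finset V × Finset V → (Finset V × Finset V) ⊕ (Finset V ⊕ V))).card
        ≤ 2 ^ X.card * 2 ^ X.card := by
      refine le_trans Finset.card_image_le ?_
      rw [Finset.card_product, Finset.card_powerset]
    have hc2 : (X.powerset.image (fun t => (Sum.inr (Sum.inl t) :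
        (Finset V × Finset V) ⊕ (Finset V ⊕ V)))).card ≤ 2 ^ X.card := by
      refine le_trans Finset.card_image_le ?_
      rw [Finset.card_powerset]
    have hc3 : (X.image (fun x => (Sum.inr (Sum.inr x) :
        (Finset V × Finset V) ⊕ (Finset V ⊕ V)))).card ≤ X.card :=
      Finset.card_image_le
    omega
  have h3 : 2 ^ X.card ≤ 2 ^ maxCutRank G := Nat.pow_le_pow_right (by norm_num) hcard
  have h4 : maxCutRank G < 2 ^ maxCutRank G := Nat.lt_two_pow_self
  have h5 : 2 ^ (2 * maxCutRank G + 2) = 4 * (2 ^ maxCutRank G * 2 ^ maxCutRank G) := by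
    rw [two_mul, pow_add, pow_add]
    ring
  have h6 : 1 ≤ 2 ^ maxCutRank G := Nat.one_le_two_pow
  calc nd G ≤ 2 ^ X.card * 2 ^ X.card + 2 ^ X.card + X.card := h1.trans h2
    _ ≤ 2 ^ maxCutRank G * 2 ^ maxCutRank G + 2 ^ maxCutRank G + maxCutRank G := by
        gcongr <;> norm_num
    _ < 2 ^ (2 * maxCutRank G + 2) := by
        rw [h5]
        nlinarith

end Aux

/-- For a graph with at least one edge,
`Eρ(G) < maxρ(G) ≤ mr(F₂,G) ≤ nd(G) < 2^(2 maxρ(G) + 2) ≤ 2^(8 Eρ(G) + 2)`. -/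
theorem stmt1 {V : Type} [Fintype V] [DecidableEq V] (G : SimpleGraph V)
    (hE : ∃ x y, G.Adj x y) :
    avgCutRank G < maxCutRank G ∧
    maxCutRank G ≤ minRank (ZMod 2) G ∧
    minRank (ZMod 2) G ≤ nd G ∧
    (nd G : ℝ) < 2 ^ (2 * maxCutRank G + 2) ∧
    (2 : ℝ) ^ (2 * maxCutRank G + 2) ≤ (2 : ℝ) ^ (8 * avgCutRank G + 2) := by
  refine ⟨avg_lt_max G hE, max_le_minRank G, minRank_le_nd G, ?_, ?_⟩
  · exact_mod_cast nd_lt_pow G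
  · have hk : (maxCutRank G : ℝ) ≤ 4 * avgCutRank G := max_le_four_avg G
    rw [← Real.rpow_natCast (2:ℝ) (2 * maxCutRank G + 2)]
    apply Real.rpow_le_rpow_of_exponent_le one_le_two
    push_cast
    linarith

end AvgCutRank
end

section
/- Every finite simple graph G without isolated vertices satisfies Eρ(G) ≥ 1 − 2^{1−|V(G)|}, and for nonempty such G equality holds if and only if G is a star or a complete graph. -/
open scoped Classical

namespace AvgCutRank

variable {V : Type*} {W : Type*}

section Aux

set_option linter.unusedSectionVars false

variable {m n : Type*} [Fintype m] [Fintype n] {F : Type*} [Field F]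

private lemma rank_ge_two_of_det (M : Matrix m n F) (x1 x2 : m) (y1 y2 : n)
    (h : M x1 y1 * M x2 y2 - M x1 y2 * M x2 y1 ≠ 0) : 2 ≤ M.rank := by
  classical
  set c1 := M.mulVec (Pi.single y1 1) with hc1
  set c2 := M.mulVec (Pi.single y2 1) with hc2
  have hcol : ∀ (y : n) (i : m), M.mulVec (Pi.single y 1) i = M i y := by
    intro y i; rw [Matrix.mulVec_single]; simp
  have hli : LinearIndependent F ![c1, c2] := by
    rw [LinearIndependent.pair_iff]
    intro a b hab
    have e1 : a * M x1 y1 + b * M x1 y2 = 0 := by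
      have := congrFun hab x1
      simpa [hc1, hc2, hcol] using this
    have e2 : a * M x2 y1 + b * M x2 y2 = 0 := by
      have := congrFun hab x2
      simpa [hc1, hc2, hcol] using this
    constructor
    · have ha : a * (M x1 y1 * M x2 y2 - M x1 y2 * M x2 y1) = 0 := by
        linear_combination M x2 y2 * e1 - M x1 y2 * e2
      exact (mul_eq_zero.mp ha).resolve_right h
    · have hb : b * (M x1 y1 * M x2 y2 - M x1 y2 * M x2 y1) = 0 := by
        linear_combination M x1 y1 * e2 - M x2 y1 * e1
      exact (mul_eq_zero.mp hb).resolve_right h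
  have hspan : Submodule.span F (Set.range ![c1, c2]) ≤ LinearMap.range M.mulVecLin := by
    rw [Submodule.span_le]
    rintro v ⟨i, rfl⟩
    fin_cases i <;> exact ⟨_, rfl⟩
  have := Submodule.finrank_mono hspan
  rw [finrank_span_eq_card hli] at this
  simpa [Matrix.rank] using this

private lemma rank_ge_one_of_ne (M : Matrix m n F) (x : m) (y : n) (h : M x y ≠ 0) :
    1 ≤ M.rank := by
  classical
  have hcol : M.mulVec (Pi.single y 1) ∈ LinearMap.range M.mulVecLin := ⟨_, rfl⟩
  have hne : M.mulVec (Pi.single y 1) ≠ 0 := by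
    intro h0
    apply h
    have := congrFun h0 x
    simpa using this
  have hle : Submodule.span F {M.mulVec (Pi.single y 1)} ≤ LinearMap.range M.mulVecLin := by
    rw [Submodule.span_le]; simpa using hcol
  have h2 := Submodule.finrank_mono hle
  rw [finrank_span_singleton hne] at h2
  simpa [Matrix.rank] using h2

private lemma rank_le_one_of_rows (M : Matrix m n F) (r : n → F) (s : m → F)
    (h : ∀ i j, M i j = s i * r j) : M.rank ≤ 1 := by
  classical
  have hrange : LinearMap.range M.mulVecLin ≤ Submodule.span F {s} := by
    rintro v ⟨x, rfl⟩
    have hv : M.mulVecLin x = (∑ j, r j * x j) • s := by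
      funext i
      simp only [Matrix.mulVecLin_apply, Matrix.mulVec, dotProduct, Pi.smul_apply,
        smul_eq_mul, Finset.sum_mul, Finset.mul_sum]
      refine Finset.sum_congr rfl fun j _ => by rw [h]; ring
    rw [hv]
    exact Submodule.smul_mem _ _ (Submodule.mem_span_singleton_self s)
  have h1 := Submodule.finrank_mono hrange
  calc M.rank ≤ Module.finrank F (Submodule.span F {s}) := h1
    _ ≤ 1 := by
        have := finrank_span_le_card (R := F) ({s} : Set (m → F))
        simpa using this

private lemma rank_eq_zero_of_isEmpty_row [IsEmpty m] (M : Matrix m n F) : M.rank = 0 :=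
  le_antisymm (by simpa using M.rank_le_card_height) (Nat.zero_le _)

private lemma rank_eq_zero_of_isEmpty_col [IsEmpty n] (M : Matrix m n F) : M.rank = 0 :=
  le_antisymm (by simpa using M.rank_le_card_width) (Nat.zero_le _)

end Aux

section CutRankLemmas

variable {V : Type} [Fintype V] [DecidableEq V] (G : SimpleGraph V)

private lemma cr_pos {X : Finset V} {x y : V} (hx : x ∈ X) (hy : y ∉ X) (hxy : G.Adj x y) :
    1 ≤ cutRank G X := by
  refine rank_ge_one_of_ne _ (⟨x, hx⟩ : (X : Finset V)) (⟨y, Finset.mem_compl.mpr hy⟩) ?_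
  simp [hxy]

private lemma cr_two {X : Finset V} {x1 x2 y1 y2 : V}
    (hx1 : x1 ∈ X) (hx2 : x2 ∈ X) (hy1 : y1 ∉ X) (hy2 : y2 ∉ X)
    (h11 : G.Adj x1 y1) (h21 : ¬ G.Adj x2 y1) (h22 : G.Adj x2 y2) :
    2 ≤ cutRank G X := by
  refine rank_ge_two_of_det _ (⟨x1, hx1⟩ : (X : Finset V)) ⟨x2, hx2⟩
    (⟨y1, Finset.mem_compl.mpr hy1⟩) ⟨y2, Finset.mem_compl.mpr hy2⟩ ?_
  simp only [Matrix.of_apply, if_pos h11, if_neg h21, if_pos h22]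
  simp only [mul_zero, sub_zero, one_mul]
  decide

private lemma cr_le_one {X : Finset V} (r s : V → ZMod 2)
    (h : ∀ x ∈ X, ∀ y ∉ X, (if G.Adj x y then (1 : ZMod 2) else 0) = s x * r y) :
    cutRank G X ≤ 1 := by
  refine rank_le_one_of_rows _ (fun y => r y.1) (fun x => s x.1) ?_
  rintro ⟨x, hx⟩ ⟨y, hy⟩
  exact h x hx y (Finset.mem_compl.mp hy)

private lemma cr_empty : cutRank G (∅ : Finset V) = 0 := by
  haveI : IsEmpty ((∅ : Finset V) : Type) := Finset.isEmpty_coe_sort.mpr rfl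
  exact rank_eq_zero_of_isEmpty_row _

private lemma cr_univ : cutRank G (Finset.univ : Finset V) = 0 := by
  haveI : IsEmpty (((Finset.univ : Finset V)ᶜ : Finset V) : Type) :=
    Finset.isEmpty_coe_sort.mpr (by simp)
  exact rank_eq_zero_of_isEmpty_col _

end CutRankLemmas

section Counting

set_option linter.unusedSectionVars false
set_option maxHeartbeats 1000000

variable {V : Type} [Fintype V] [DecidableEq V] (G : SimpleGraph V)

/-- `X` is crossed inside `A`. -/
private def Crossp (A X : Finset V) : Prop :=
  ∃ x ∈ A, x ∈ X ∧ ∃ y ∈ A, y ∉ X ∧ G.Adj x y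

private lemma noncross_card {m : ℕ} (hm : Fintype.card V = m + 1) {A : Finset V}
    (hA : A.Nonempty) (hnc : ∀ x ∈ A, ∀ y ∉ A, ¬G.Adj x y)
    (hniso : ∀ v : V, ∃ w, G.Adj v w) :
    (Finset.univ.filter fun X : Finset V => ¬ Crossp G A X).card ≤ 2 ^ m := by
  obtain ⟨a0, ha0⟩ := hA
  obtain ⟨b0, hab⟩ := hniso a0
  have hb0 : b0 ∈ A := by
    by_contra hb0
    exact hnc a0 ha0 b0 hb0 hab
  have hne : a0 ≠ b0 := hab.ne
  have key : ∀ X : Finset V, ¬ Crossp G A X → (a0 ∈ X ↔ b0 ∈ X) := by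
    intro X hX
    constructor
    · intro haX
      by_contra hbX
      exact hX ⟨a0, ha0, haX, b0, hb0, hbX, hab⟩
    · intro hbX
      by_contra haX
      exact hX ⟨b0, hb0, hbX, a0, ha0, haX, hab.symm⟩
  have hcard : ((Finset.univ.erase b0).powerset).card = 2 ^ m := by
    rw [Finset.card_powerset, Finset.card_erase_of_mem (Finset.mem_univ _),
      Finset.card_univ, hm, Nat.add_sub_cancel]
  rw [← hcard]
  apply Finset.card_le_card_of_injOn (fun X => X.erase b0)
  · intro X _
    rw [Finset.mem_coe, Finset.mem_powerset]
    exact Finset.erase_subset_erase _ (Finset.subset_univ X)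
  · intro X1 h1 X2 h2 h12
    have h12' : X1.erase b0 = X2.erase b0 := h12
    simp only [Finset.coe_filter, Set.mem_setOf_eq] at h1 h2
    have k1 := key X1 h1.2
    have k2 := key X2 h2.2
    ext u
    by_cases hu : u = b0
    · subst hu
      have ha : a0 ∈ X1 ↔ a0 ∈ X2 := by
        constructor
        · intro h
          have h' : a0 ∈ X2.erase u := h12' ▸ Finset.mem_erase_of_ne_of_mem hne h
          exact (Finset.mem_erase.mp h').2
        · intro h
          have h' : a0 ∈ X1.erase u := h12'.symm ▸ Finset.mem_erase_of_ne_of_mem hne h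
          exact (Finset.mem_erase.mp h').2
      exact (k1.symm.trans ha).trans k2
    · have hiff : u ∈ X1.erase b0 ↔ u ∈ X2.erase b0 := by rw [h12']
      rw [Finset.mem_erase, Finset.mem_erase] at hiff
      simpa [hu] using hiff

private lemma sum_indicator_le (p : Finset V → Prop)
    (hp : ∀ X, p X → 1 ≤ cutRank G X) :
    (Finset.univ.filter p).card ≤ ∑ X : Finset V, cutRank G X := by
  calc (Finset.univ.filter p).card
      = ∑ X ∈ Finset.univ.filter p, 1 := by rw [Finset.sum_const, smul_eq_mul, mul_one]
    _ ≤ ∑ X ∈ Finset.univ.filter p, cutRank G X :=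
        Finset.sum_le_sum fun X hX => hp X (Finset.mem_filter.mp hX).2
    _ ≤ ∑ X : Finset V, cutRank G X :=
        Finset.sum_le_sum_of_subset (Finset.filter_subset _ _)

private lemma proper_card_ge :
    2 ^ Fintype.card V ≤
      (Finset.univ.filter fun X : Finset V => X ≠ ∅ ∧ X ≠ Finset.univ).card + 2 := by
  have h := Finset.card_filter_add_card_filter_not
    (s := (Finset.univ : Finset (Finset V)))
    (fun X : Finset V => X ≠ ∅ ∧ X ≠ Finset.univ)
  have hsub : (Finset.univ.filter fun X : Finset V => ¬(X ≠ ∅ ∧ X ≠ Finset.univ))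
      ⊆ {(∅ : Finset V), Finset.univ} := by
    intro X hX
    rw [Finset.mem_filter] at hX
    have := hX.2
    by_cases h1 : X = ∅
    · simp [h1]
    · by_cases h2 : X = Finset.univ
      · simp [h2]
      · exact absurd ⟨h1, h2⟩ this
  have h2 : (Finset.univ.filter fun X : Finset V => ¬(X ≠ ∅ ∧ X ≠ Finset.univ)).card ≤ 2 := by
    calc _ ≤ ({(∅ : Finset V), Finset.univ} : Finset (Finset V)).card :=
          Finset.card_le_card hsub
      _ ≤ 2 := (Finset.card_insert_le _ _).trans (by simp)
  have hcard : (Finset.univ : Finset (Finset V)).card = 2 ^ Fintype.card V := by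
    rw [Finset.card_univ, Fintype.card_finset]
  omega

private lemma proper_card_eq (hV : Nonempty V) :
    (Finset.univ.filter fun X : Finset V => ¬(X ≠ ∅ ∧ X ≠ Finset.univ)).card = 2 := by
  have huniv : (Finset.univ : Finset V) ≠ ∅ := Finset.univ_nonempty.ne_empty
  have : (Finset.univ.filter fun X : Finset V => ¬(X ≠ ∅ ∧ X ≠ Finset.univ))
      = {(∅ : Finset V), Finset.univ} := by
    ext X
    simp only [Finset.mem_filter, Finset.mem_univ, true_and, Finset.mem_insert,
      Finset.mem_singleton]
    tauto
  rw [this, Finset.card_insert_of_notMem (by simpa using huniv.symm), Finset.card_singleton]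

private lemma disconnected_bound (hniso : ∀ v : V, ∃ w, G.Adj v w)
    {A : Finset V} (hA : A.Nonempty) (hAu : A ≠ Finset.univ)
    (hnc : ∀ x ∈ A, ∀ y ∉ A, ¬G.Adj x y) :
    2 ^ Fintype.card V ≤ ∑ X : Finset V, cutRank G X := by
  have hV : Nonempty V := ⟨hA.choose⟩
  obtain ⟨m, hm⟩ : ∃ m, Fintype.card V = m + 1 := by
    have := Fintype.card_pos (α := V)
    exact ⟨Fintype.card V - 1, by omega⟩
  -- complement facts
  have hB : (Aᶜ : Finset V).Nonempty := by
    by_contra h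
    rw [Finset.not_nonempty_iff_eq_empty] at h
    apply hAu
    rw [Finset.eq_univ_iff_forall]
    intro x
    by_contra hx
    have : x ∈ Aᶜ := Finset.mem_compl.mpr hx
    simp [h] at this
  have hncB : ∀ x ∈ (Aᶜ : Finset V), ∀ y ∉ (Aᶜ : Finset V), ¬G.Adj x y := by
    intro x hx y hy hadj
    rw [Finset.mem_compl] at hx
    rw [Finset.mem_compl, not_not] at hy
    exact hnc y hy x hx hadj.symm
  -- pointwise bound
  have hpoint : ∀ X : Finset V,
      ((if Crossp G A X then 1 else 0) + (if Crossp G Aᶜ X then 1 else 0) : ℕ)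
        ≤ cutRank G X := by
    intro X
    by_cases h1 : Crossp G A X <;> by_cases h2 : Crossp G Aᶜ X
    · rw [if_pos h1, if_pos h2]
      obtain ⟨x1, hx1A, hx1X, y1, hy1A, hy1X, hadj1⟩ := h1
      obtain ⟨x2, hx2B, hx2X, y2, hy2B, hy2X, hadj2⟩ := h2
      have h21 : ¬ G.Adj x2 y1 := by
        intro h
        exact hnc y1 hy1A x2 (Finset.mem_compl.mp hx2B) h.symm
      exact cr_two G hx1X hx2X hy1X hy2X hadj1 h21 hadj2
    · rw [if_pos h1, if_neg h2, add_zero]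
      obtain ⟨x1, hx1A, hx1X, y1, hy1A, hy1X, hadj1⟩ := h1
      exact cr_pos G hx1X hy1X hadj1
    · rw [if_neg h1, if_pos h2, zero_add]
      obtain ⟨x2, hx2B, hx2X, y2, hy2B, hy2X, hadj2⟩ := h2
      exact cr_pos G hx2X hy2X hadj2
    · simp [if_neg h1, if_neg h2]
  have hsum : (Finset.univ.filter fun X : Finset V => Crossp G A X).card
      + (Finset.univ.filter fun X : Finset V => Crossp G Aᶜ X).card
      ≤ ∑ X : Finset V, cutRank G X := by
    calc _ = ∑ X : Finset V,
          ((if Crossp G A X then 1 else 0) + (if Crossp G Aᶜ X then 1 else 0) : ℕ) := by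
            rw [Finset.sum_add_distrib]
            congr 1 <;> · rw [Finset.sum_boole]; simp
      _ ≤ _ := Finset.sum_le_sum fun X _ => hpoint X
  have hA1 := Finset.card_filter_add_card_filter_not
    (s := (Finset.univ : Finset (Finset V))) (fun X : Finset V => Crossp G A X)
  have hB1 := Finset.card_filter_add_card_filter_not
    (s := (Finset.univ : Finset (Finset V))) (fun X : Finset V => Crossp G Aᶜ X)
  have hA2 := noncross_card G hm hA hnc hniso
  have hB2 := noncross_card G hm hB hncB hniso
  have hcard : (Finset.univ : Finset (Finset V)).card = 2 ^ Fintype.card V := by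
    rw [Finset.card_univ, Fintype.card_finset]
  rw [hcard, hm] at hA1 hB1
  rw [hm]
  have h2m : 2 ^ (m + 1) = 2 ^ m + 2 ^ m := by ring
  omega

end Counting

section Structure

set_option linter.unusedSectionVars false
set_option maxHeartbeats 1000000

variable {V : Type} [Fintype V] [DecidableEq V] {G : SimpleGraph V}

private lemma pair_key (h2 : ∀ X : Finset V, cutRank G X ≤ 1) {a b : V} (hab : a ≠ b)
    {z : V} (hza : z ≠ a) (hzb : z ≠ b) (haz : G.Adj a z) (hbz : ¬ G.Adj b z) :
    ∀ w, G.Adj b w → w = a := by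
  intro w hbw
  by_contra hwa
  have hwb : w ≠ b := fun h => (G.ne_of_adj hbw) h.symm
  have haX : a ∈ ({a, b} : Finset V) := by simp
  have hbX : b ∈ ({a, b} : Finset V) := by simp
  have hzX : z ∉ ({a, b} : Finset V) := by simp [hza, hzb]
  have hwX : w ∉ ({a, b} : Finset V) := by simp [hwa, hwb]
  have := cr_two G haX hbX hzX hwX haz hbz hbw
  have := h2 ({a, b} : Finset V)
  omega

private lemma pair_property (h2 : ∀ X : Finset V, cutRank G X ≤ 1) {u v : V} (huv : u ≠ v) :
    (∀ z, z ≠ u → z ≠ v → (G.Adj u z ↔ G.Adj v z)) ∨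
    (∀ z, G.Adj u z → z = v) ∨ (∀ z, G.Adj v z → z = u) := by
  by_cases htw : ∀ z, z ≠ u → z ≠ v → (G.Adj u z ↔ G.Adj v z)
  · exact Or.inl htw
  · push_neg at htw
    obtain ⟨z, hzu, hzv, hne⟩ := htw
    rcases hne with ⟨ha, hb⟩ | ⟨ha, hb⟩
    · exact Or.inr (Or.inr (pair_key h2 huv hzu hzv ha hb))
    · exact Or.inr (Or.inl (pair_key h2 huv.symm hzv hzu hb ha))

private lemma classification (hniso : ∀ v : V, ∃ w, G.Adj v w)
    (h2 : ∀ X : Finset V, cutRank G X ≤ 1) :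
    (∃ c : V, ∀ x y : V, G.Adj x y ↔ (x = c ∨ y = c) ∧ x ≠ y) ∨
    (∀ x y : V, x ≠ y → G.Adj x y) := by
  by_cases hleaf : ∃ ℓ c, G.Adj ℓ c ∧ ∀ z, G.Adj ℓ z → z = c
  · obtain ⟨ℓ, c, hlc, hl⟩ := hleaf
    have hstar : ∀ x, x ≠ c → G.Adj x c ∧ ∀ z, G.Adj x z → z = c := by
      intro x hxc
      by_cases hxl : x = ℓ
      · subst hxl
        exact ⟨hlc, hl⟩
      · have hℓx : ℓ ≠ x := fun h => hxl h.symm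
        rcases pair_property h2 hℓx with htw | hpd | hpx
        · have hnadj : ¬ G.Adj ℓ x := fun h => hxc (hl x h)
          have hadjxc : G.Adj x c := (htw c hlc.ne.symm (Ne.symm hxc)).mp hlc
          refine ⟨hadjxc, fun z hz => ?_⟩
          by_cases hzℓ : z = ℓ
          · subst hzℓ
            exact absurd hz.symm hnadj
          · have hzx : z ≠ x := fun h => (G.ne_of_adj hz) h.symm
            exact hl z ((htw z hzℓ hzx).mpr hz)
        · exact absurd (hpd c hlc).symm hxc
        · obtain ⟨w, hw⟩ := hniso x
          have hwl : w = ℓ := hpx w hw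
          have hlx : G.Adj ℓ x := (hwl ▸ hw).symm
          exact absurd (hl x hlx) hxc
    left
    refine ⟨c, fun x y => ⟨fun hxy => ?_, fun ⟨hor, hne⟩ => ?_⟩⟩
    · refine ⟨?_, G.ne_of_adj hxy⟩
      by_contra h
      push_neg at h
      exact h.2 ((hstar x h.1).2 y hxy)
    · rcases hor with rfl | rfl
      · have hy : y ≠ x := Ne.symm hne
        exact ((hstar y hy).1).symm
      · exact (hstar x hne).1
  · push_neg at hleaf
    have htw : ∀ u v : V, u ≠ v → ∀ z, z ≠ u → z ≠ v → (G.Adj u z ↔ G.Adj v z) := by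
      intro u v huv
      rcases pair_property h2 huv with h | h | h
      · exact h
      · exfalso
        obtain ⟨w, hw⟩ := hniso u
        have hadj : G.Adj u v := (h w hw) ▸ hw
        obtain ⟨z, hz, hzv⟩ := hleaf u v hadj
        exact hzv (h z hz)
      · exfalso
        obtain ⟨w, hw⟩ := hniso v
        have hadj : G.Adj v u := (h w hw) ▸ hw
        obtain ⟨z, hz, hzu⟩ := hleaf v u hadj
        exact hzu (h z hz)
    right
    intro u v huv
    by_contra hnadj
    obtain ⟨z, hz⟩ := hniso u
    have hzv : z ≠ v := fun h => hnadj (h ▸ hz)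
    have hzu : z ≠ u := fun h => (G.ne_of_adj hz) h.symm
    have havz : G.Adj v z := (htw u v huv z hzu hzv).mp hz
    exact hnadj ((htw u z (G.ne_of_adj hz) v (Ne.symm huv) (Ne.symm hzv)).mpr havz.symm)

private lemma cr_star {c : V} (hc : ∀ x y : V, G.Adj x y ↔ (x = c ∨ y = c) ∧ x ≠ y)
    {X : Finset V} (hX1 : X ≠ ∅) (hX2 : X ≠ Finset.univ) : cutRank G X = 1 := by
  obtain ⟨x, hx⟩ := Finset.nonempty_iff_ne_empty.mpr hX1
  obtain ⟨y, hy⟩ : ∃ y, y ∉ X := by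
    by_contra h
    push_neg at h
    exact hX2 (Finset.eq_univ_iff_forall.mpr h)
  apply le_antisymm
  · by_cases hcX : c ∈ X
    · apply cr_le_one G (fun _ => 1) (fun x => if x = c then 1 else 0)
      intro a ha b hb
      have hbc : b ≠ c := fun h => hb (h ▸ hcX)
      by_cases hac : a = c
      · subst hac
        have : G.Adj a b := (hc a b).mpr ⟨Or.inl rfl, Ne.symm hbc⟩
        simp [this]
      · have : ¬ G.Adj a b := by
          rw [hc]
          rintro ⟨h | h, -⟩
          exacts [hac h, hbc h]
        simp [this, hac]
    · apply cr_le_one G (fun y => if y = c then 1 else 0) (fun _ => 1)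
      intro a ha b hb
      have hac : a ≠ c := fun h => hcX (h ▸ ha)
      by_cases hbc : b = c
      · subst hbc
        have : G.Adj a b := (hc a b).mpr ⟨Or.inr rfl, hac⟩
        simp [this]
      · have : ¬ G.Adj a b := by
          rw [hc]
          rintro ⟨h | h, -⟩
          exacts [hac h, hbc h]
        simp [this, hbc]
  · by_cases hcX : c ∈ X
    · have hyc : y ≠ c := fun h => hy (h ▸ hcX)
      exact cr_pos G hcX hy ((hc c y).mpr ⟨Or.inl rfl, Ne.symm hyc⟩)
    · have hxc : x ≠ c := fun h => hcX (h ▸ hx)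
      exact cr_pos G hx hcX ((hc x c).mpr ⟨Or.inr rfl, hxc⟩)

private lemma cr_complete (hcom : ∀ x y : V, x ≠ y → G.Adj x y)
    {X : Finset V} (hX1 : X ≠ ∅) (hX2 : X ≠ Finset.univ) : cutRank G X = 1 := by
  obtain ⟨x, hx⟩ := Finset.nonempty_iff_ne_empty.mpr hX1
  obtain ⟨y, hy⟩ : ∃ y, y ∉ X := by
    by_contra h
    push_neg at h
    exact hX2 (Finset.eq_univ_iff_forall.mpr h)
  apply le_antisymm
  · apply cr_le_one G (fun _ => 1) (fun _ => 1)
    intro a ha b hb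
    have hne : a ≠ b := fun h => hb (h ▸ ha)
    simp [hcom a b hne]
  · exact cr_pos G hx hy (hcom x y (fun h => hy (h ▸ hx)))

end Structure

section Main

set_option linter.unusedSectionVars false
set_option maxHeartbeats 1000000

variable {V : Type} [Fintype V] [DecidableEq V] {G : SimpleGraph V}

private lemma S_bound (hniso : ∀ v : V, ∃ w, G.Adj v w) :
    2 ^ Fintype.card V ≤ (∑ X : Finset V, cutRank G X) + 2 := by
  by_cases hconn : ∀ X : Finset V, X ≠ ∅ → X ≠ Finset.univ → 1 ≤ cutRank G X
  · have h1 : (Finset.univ.filter fun X : Finset V => X ≠ ∅ ∧ X ≠ Finset.univ).card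
        ≤ ∑ X : Finset V, cutRank G X := by
      calc (Finset.univ.filter fun X : Finset V => X ≠ ∅ ∧ X ≠ Finset.univ).card
          = ∑ X ∈ Finset.univ.filter (fun X : Finset V => X ≠ ∅ ∧ X ≠ Finset.univ), 1 := by
            rw [Finset.sum_const, smul_eq_mul, mul_one]
        _ ≤ ∑ X ∈ Finset.univ.filter (fun X : Finset V => X ≠ ∅ ∧ X ≠ Finset.univ),
              cutRank G X :=
            Finset.sum_le_sum fun X hX => by
              have h := Finset.mem_filter.mp hX
              exact hconn X h.2.1 h.2.2
        _ ≤ ∑ X : Finset V, cutRank G X :=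
            Finset.sum_le_sum_of_subset (Finset.filter_subset _ _)
    have h2 := proper_card_ge (V := V)
    omega
  · push_neg at hconn
    obtain ⟨A, hA1, hA2, hA3⟩ := hconn
    have hnc : ∀ x ∈ A, ∀ y ∉ A, ¬G.Adj x y := by
      intro x hx y hy hadj
      have := cr_pos G hx hy hadj
      omega
    have := disconnected_bound G hniso hA1 hA2 hnc
    omega

private lemma eq_forward (hniso : ∀ v : V, ∃ w, G.Adj v w) (hV : Nonempty V)
    (hEq : (∑ X : Finset V, cutRank G X) + 2 = 2 ^ Fintype.card V) :
    (∃ c : V, ∀ x y : V, G.Adj x y ↔ (x = c ∨ y = c) ∧ x ≠ y) ∨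
    (∀ x y : V, x ≠ y → G.Adj x y) := by
  have h2 : ∀ X : Finset V, cutRank G X ≤ 1 := by
    by_contra hcon
    push_neg at hcon
    obtain ⟨X0, hX0⟩ := hcon
    have hX0e : X0 ≠ ∅ := by
      rintro rfl
      rw [cr_empty] at hX0
      omega
    have hX0u : X0 ≠ Finset.univ := by
      rintro rfl
      rw [cr_univ] at hX0
      omega
    have e1 : cutRank G X0 + ∑ X ∈ Finset.univ.erase X0, cutRank G X
        = ∑ X : Finset V, cutRank G X :=
      Finset.add_sum_erase _ _ (Finset.mem_univ X0)
    have e2 : ((Finset.univ.erase X0).filter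
        fun X : Finset V => X ≠ ∅ ∧ X ≠ Finset.univ).card
          ≤ ∑ X ∈ Finset.univ.erase X0, cutRank G X := by
      have hsub : ∀ X ∈ (Finset.univ.erase X0).filter
          (fun X : Finset V => X ≠ ∅ ∧ X ≠ Finset.univ), 1 ≤ cutRank G X := by
        intro X hX
        rw [Finset.mem_filter] at hX
        rcases Nat.eq_zero_or_pos (cutRank G X) with h | h
        · exfalso
          have hnc : ∀ x ∈ X, ∀ y ∉ X, ¬G.Adj x y := by
            intro x hx y hy hadj
            have := cr_pos G hx hy hadj
            omega
          have := disconnected_bound G hniso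
            (Finset.nonempty_iff_ne_empty.mpr hX.2.1) hX.2.2 hnc
          omega
        · exact h
      calc ((Finset.univ.erase X0).filter
            fun X : Finset V => X ≠ ∅ ∧ X ≠ Finset.univ).card
          = ∑ X ∈ (Finset.univ.erase X0).filter
              (fun X : Finset V => X ≠ ∅ ∧ X ≠ Finset.univ), 1 := by
            rw [Finset.sum_const, smul_eq_mul, mul_one]
        _ ≤ ∑ X ∈ (Finset.univ.erase X0).filter
              (fun X : Finset V => X ≠ ∅ ∧ X ≠ Finset.univ), cutRank G X :=
            Finset.sum_le_sum hsub
        _ ≤ ∑ X ∈ Finset.univ.erase X0, cutRank G X :=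
            Finset.sum_le_sum_of_subset (Finset.filter_subset _ _)
    have e3 : (Finset.univ.erase X0).filter
        (fun X : Finset V => X ≠ ∅ ∧ X ≠ Finset.univ)
          = (Finset.univ.filter fun X : Finset V => X ≠ ∅ ∧ X ≠ Finset.univ).erase X0 :=
      Finset.filter_erase _ _ _
    have e4 : X0 ∈ Finset.univ.filter fun X : Finset V => X ≠ ∅ ∧ X ≠ Finset.univ :=
      Finset.mem_filter.mpr ⟨Finset.mem_univ _, hX0e, hX0u⟩
    have e5 := Finset.card_erase_of_mem e4
    have e6 : 1 ≤ (Finset.univ.filter fun X : Finset V => X ≠ ∅ ∧ X ≠ Finset.univ).card :=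
      Finset.card_pos.mpr ⟨X0, e4⟩
    have e7 := Finset.card_filter_add_card_filter_not
      (s := (Finset.univ : Finset (Finset V)))
      (fun X : Finset V => X ≠ ∅ ∧ X ≠ Finset.univ)
    have e8 := proper_card_eq (V := V) hV
    have e9 : (Finset.univ : Finset (Finset V)).card = 2 ^ Fintype.card V := by
      rw [Finset.card_univ, Fintype.card_finset]
    rw [e3] at e2
    rw [e5] at e2
    omega
  exact classification hniso h2

private lemma eq_backward (hV : Nonempty V)
    (hvals : ∀ X : Finset V, X ≠ ∅ → X ≠ Finset.univ → cutRank G X = 1) :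
    (∑ X : Finset V, cutRank G X) + 2 = 2 ^ Fintype.card V := by
  have hsum : ∑ X : Finset V, cutRank G X
      = (Finset.univ.filter fun X : Finset V => X ≠ ∅ ∧ X ≠ Finset.univ).card := by
    rw [Finset.card_filter]
    refine Finset.sum_congr rfl fun X _ => ?_
    by_cases hp : X ≠ ∅ ∧ X ≠ Finset.univ
    · rw [if_pos hp, hvals X hp.1 hp.2]
    · rw [if_neg hp]
      by_cases h1 : X = ∅
      · rw [h1, cr_empty]
      · have h2 : X = Finset.univ := by tauto
        rw [h2, cr_univ]
  have e7 := Finset.card_filter_add_card_filter_not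
    (s := (Finset.univ : Finset (Finset V)))
    (fun X : Finset V => X ≠ ∅ ∧ X ≠ Finset.univ)
  have e8 := proper_card_eq (V := V) hV
  have e9 : (Finset.univ : Finset (Finset V)).card = 2 ^ Fintype.card V := by
    rw [Finset.card_univ, Fintype.card_finset]
  omega

end Main

set_option maxHeartbeats 1000000 in
/-- A graph without isolated vertices has average cut-rank at least
`1 − 2^(1−|V(G)|)`; for nonempty such graphs equality holds iff the graph is a star
or a complete graph. -/
theorem stmt10 {V : Type} [Fintype V] [DecidableEq V] (G : SimpleGraph V)
    (hniso : ∀ v : V, ∃ w, G.Adj v w) :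
    1 - (2 : ℝ) ^ (1 - (Fintype.card V : ℤ)) ≤ avgCutRank G ∧
    (Nonempty V →
      (avgCutRank G = 1 - (2 : ℝ) ^ (1 - (Fintype.card V : ℤ)) ↔
        (∃ c : V, ∀ x y : V, G.Adj x y ↔ (x = c ∨ y = c) ∧ x ≠ y) ∨
        (∀ x y : V, x ≠ y → G.Adj x y))) := by
  have hS : 2 ^ Fintype.card V ≤ (∑ X : Finset V, cutRank G X) + 2 := S_bound hniso
  have h2n : (0:ℝ) < 2 ^ Fintype.card V := by positivity
  have hz : (2:ℝ) ^ (1 - (Fintype.card V : ℤ)) = 2 / 2 ^ Fintype.card V := by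
    rw [zpow_sub₀ (two_ne_zero), zpow_one, zpow_natCast]
  have havg : avgCutRank G = ((∑ X : Finset V, cutRank G X : ℕ) : ℝ) / 2 ^ Fintype.card V := by
    unfold avgCutRank
    rw [Nat.cast_sum]
  constructor
  · rw [havg, hz, sub_le_iff_le_add, ← add_div, le_div_iff₀ h2n, one_mul]
    calc (2:ℝ) ^ Fintype.card V
        = (((2 ^ Fintype.card V : ℕ) : ℝ)) := by push_cast; ring
      _ ≤ (((∑ X : Finset V, cutRank G X) + 2 : ℕ) : ℝ) := by exact_mod_cast hS
      _ = ((∑ X : Finset V, cutRank G X : ℕ) : ℝ) + 2 := by push_cast; ring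
  · intro hV
    have key : (avgCutRank G = 1 - (2:ℝ) ^ (1 - (Fintype.card V : ℤ)))
        ↔ (∑ X : Finset V, cutRank G X) + 2 = 2 ^ Fintype.card V := by
      rw [havg, hz, eq_sub_iff_add_eq, ← add_div, div_eq_one_iff_eq h2n.ne']
      constructor
      · intro h
        have : (((∑ X : Finset V, cutRank G X) + 2 : ℕ) : ℝ)
            = ((2 ^ Fintype.card V : ℕ) : ℝ) := by push_cast; rw [← h]; push_cast; ring
        exact_mod_cast this
      · intro h
        have : (((∑ X : Finset V, cutRank G X) + 2 : ℕ) : ℝ)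
            = ((2 ^ Fintype.card V : ℕ) : ℝ) := by exact_mod_cast h
        push_cast at this
        rw [← this]
        push_cast
        ring
    rw [key]
    constructor
    · exact eq_forward hniso hV
    · rintro (⟨c, hc⟩ | hcom)
      · exact eq_backward hV fun X h1 h2 => cr_star hc h1 h2
      · exact eq_backward hV fun X h1 h2 => cr_complete hcom h1 h2

end AvgCutRank
end
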